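/- Let 1 ≤ p < ∞, λ ≥ 1, let X, Y be complex Banach spaces and T : X → Y a bounded linear operator with ‖T‖ < λ^{1/p}. Suppose r ∈ ℝ_{≥0}^n is such that for every m ≥ 1 and every X-valued m-homogeneous polynomial Q(z) = ∑_{|α|=m} x_α z^α on B_{ℓ_q^n}, one has ∑_{|α|=m} ‖T(x_α)‖^p r^{pα} ≤ λ sup_{z ∈ B_{ℓ_q^n}} ‖Q(z)‖^p. Set c = ((λ - ‖T‖^p)/(2λ - ‖T‖^p))^{1/p}. Then for every bounded holomorphic f : B_{ℓ_q^n} → X with monomial coefficients x_α, one has ∑_{α ∈ ℕ_0^n} ‖T(x_α)‖^p (c r)^{pα} ≤ λ sup_{z ∈ B_{ℓ_q^n}} ‖f(z)‖^p. -/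

import Mathlib

noncomputable section

/-- The open unit ball of `ℓ_q^n` (complex `n`-space with the `q`-norm), `1 ≤ q < ∞`. -/
def ballq (q : ℝ) (n : ℕ) : Set (Fin n → ℂ) :=
  {z | (∑ j, ‖z j‖ ^ q) ^ (1 / q) < 1}

/-- The monomial `z^α`. -/
def mono {n : ℕ} (z : Fin n → ℂ) (α : Fin n → ℕ) : ℂ := ∏ j, z j ^ α j

/-- The coefficient family `a : α ↦ x_α` represents a bounded holomorphic function
`f(z) = ∑_α x_α z^α` on `B_{ℓ_q^n}` with values in `X`. -/
def IsHinf {X : Type*} [NormedAddCommGroup X] [NormedSpace ℂ X]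
    (q : ℝ) (n : ℕ) (a : (Fin n → ℕ) → X) : Prop :=
  (∀ z ∈ ballq q n, Summable fun α => mono z α • a α) ∧
    ∃ M : ℝ, ∀ z ∈ ballq q n, ‖∑' α, mono z α • a α‖ ≤ M

/-- The sup norm `‖f‖_{B_{ℓ_q^n}}` of the function represented by `a`. -/
def supnorm {X : Type*} [NormedAddCommGroup X] [NormedSpace ℂ X]
    (q : ℝ) (n : ℕ) (a : (Fin n → ℕ) → X) : ℝ :=
  sSup {y | ∃ z ∈ ballq q n, y = ‖∑' α, mono z α • a α‖}

open Finset Filter Topology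

lemma bdd_of_summable {ι X : Type*} [NormedAddCommGroup X] {f : ι → X} (hf : Summable f) :
    ∃ C : ℝ, 0 ≤ C ∧ ∀ i, ‖f i‖ ≤ C := by
  have h := hf.tendsto_cofinite_zero
  have h1 : ∀ᶠ i in Filter.cofinite, ‖f i‖ < 1 := by
    have := h.eventually (Metric.ball_mem_nhds (0:X) one_pos)
    simpa [mem_ball_zero_iff] using this
  rw [Filter.eventually_cofinite] at h1
  refine ⟨1 + ∑ i ∈ h1.toFinset, ‖f i‖, by positivity, fun i => ?_⟩
  by_cases hi : ‖f i‖ < 1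
  · have : (0:ℝ) ≤ ∑ i ∈ h1.toFinset, ‖f i‖ := Finset.sum_nonneg fun _ _ => norm_nonneg _
    linarith
  · have hmem : i ∈ h1.toFinset := by simpa using hi
    have := Finset.single_le_sum (fun j _ => norm_nonneg (f j)) hmem
    linarith

lemma summable_pow_deg {n : ℕ} {s : ℝ} (h0 : 0 ≤ s) (h1 : s < 1) :
    Summable (fun α : Fin n → ℕ => s ^ (∑ j, α j)) := by
  induction n with
  | zero => exact Summable.of_finite
  | succ n ih =>
    have hh : Summable (fun x : ℕ × (Fin n → ℕ) => s ^ x.1 * s ^ (∑ j, x.2 j)) :=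
      @Summable.mul_of_nonneg ℕ (Fin n → ℕ) (fun k => s ^ k) (fun β => s ^ (∑ j, β j))
        (summable_geometric_of_lt_one h0 h1) ih (fun k => by positivity) (fun β => by positivity)
    have heq : (fun α : Fin (n+1) → ℕ => s ^ (∑ j, α j)) =
        (fun x : ℕ × (Fin n → ℕ) => s ^ x.1 * s ^ (∑ j, x.2 j)) ∘ (Fin.consEquiv (fun _ => ℕ)).symm := by
      funext α
      simp only [Fin.consEquiv, Equiv.coe_fn_symm_mk, Function.comp_apply, Fin.sum_univ_succ, pow_add]
      rfl
    rw [heq]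
    exact (Fin.consEquiv (fun _ => ℕ)).symm.summable_iff.mpr hh

lemma zero_mem_ballq {q : ℝ} (hq : 1 ≤ q) (n : ℕ) : (0 : Fin n → ℂ) ∈ ballq q n := by
  have hq0 : q ≠ 0 := by linarith
  simp only [ballq, Set.mem_setOf_eq, Pi.zero_apply, norm_zero, Real.zero_rpow hq0,
    Finset.sum_const_zero]
  rw [Real.zero_rpow (by positivity : 1/q ≠ 0)]
  norm_num

lemma smul_mem_ballq {q : ℝ} (hq : 1 ≤ q) {n : ℕ} {z : Fin n → ℂ} (hz : z ∈ ballq q n)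
    {w : ℂ} (hw : ‖w‖ ≤ 1) : w • z ∈ ballq q n := by
  have hq0 : 0 < q := by linarith
  have key : ∀ j, ‖(w • z) j‖ ^ q = ‖w‖ ^ q * ‖z j‖ ^ q := by
    intro j
    simp only [Pi.smul_apply, smul_eq_mul, norm_mul]
    exact Real.mul_rpow (norm_nonneg _) (norm_nonneg _)
  simp only [ballq, Set.mem_setOf_eq] at hz ⊢
  calc (∑ j, ‖(w • z) j‖ ^ q) ^ (1/q) = (‖w‖ ^ q * ∑ j, ‖z j‖ ^ q) ^ (1/q) := by
        rw [Finset.mul_sum]; congr 1; exact Finset.sum_congr rfl fun j _ => key j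
    _ = (‖w‖ ^ q) ^ (1/q) * (∑ j, ‖z j‖ ^ q) ^ (1/q) := by
        refine Real.mul_rpow (by positivity) ?_
        exact Finset.sum_nonneg fun j _ => Real.rpow_nonneg (norm_nonneg _) _
    _ = ‖w‖ * (∑ j, ‖z j‖ ^ q) ^ (1/q) := by
        have hqq : q * (1/q) = 1 := by field_simp
        rw [← Real.rpow_mul (norm_nonneg w), hqq, Real.rpow_one]
    _ ≤ 1 * (∑ j, ‖z j‖ ^ q) ^ (1/q) := by
        refine mul_le_mul_of_nonneg_right hw ?_
        exact Real.rpow_nonneg (Finset.sum_nonneg fun j _ => Real.rpow_nonneg (norm_nonneg _) _) _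
    _ < 1 := by simpa using hz

lemma mono_smul {n : ℕ} (w : ℂ) (z : Fin n → ℂ) (α : Fin n → ℕ) :
    mono (w • z) α = w ^ (∑ j, α j) * mono z α := by
  simp only [mono, Pi.smul_apply, smul_eq_mul, mul_pow, Finset.prod_mul_distrib,
    Finset.prod_pow_eq_pow_sum]

section SupNorm
variable {X : Type*} [NormedAddCommGroup X] [NormedSpace ℂ X] {q : ℝ} {n : ℕ}
  {a : (Fin n → ℕ) → X}

lemma bddAbove_supset (ha : IsHinf q n a) :
    BddAbove {y | ∃ z ∈ ballq q n, y = ‖∑' α, mono z α • a α‖} := by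
  obtain ⟨M, hM⟩ := ha.2
  exact ⟨M, fun y ⟨z, hz, hy⟩ => hy ▸ hM z hz⟩

lemma norm_le_supnorm (ha : IsHinf q n a) {z : Fin n → ℂ} (hz : z ∈ ballq q n) :
    ‖∑' α, mono z α • a α‖ ≤ supnorm q n a :=
  le_csSup (bddAbove_supset ha) ⟨z, hz, rfl⟩

lemma supnorm_nonneg (hq : 1 ≤ q) (ha : IsHinf q n a) : 0 ≤ supnorm q n a :=
  le_trans (norm_nonneg _) (norm_le_supnorm ha (zero_mem_ballq hq n))

end SupNorm

lemma coeff_bound {X : Type*} [NormedAddCommGroup X] [NormedSpace ℂ X] {q : ℝ} (hq : 1 ≤ q)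
    {n : ℕ} {a : (Fin n → ℕ) → X} (ha : IsHinf q n a) {z : Fin n → ℂ} (hz : z ∈ ballq q n)
    (m : ℕ) :
    ‖∑ α ∈ Finset.Nat.antidiagonalTuple n m, mono z α • a α‖ ≤ supnorm q n a := by
  set S := supnorm q n a with hSdef
  set c : X := ∑ α ∈ Finset.Nat.antidiagonalTuple n m, mono z α • a α with hcdef
  have key : ∀ ρ : ℝ, 0 < ρ → ρ < 1 → ‖c‖ * ρ ^ m ≤ S := by
    intro ρ hρ0 hρ1
    set ρ' : ℝ := (1 + ρ) / 2 with hρ'def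
    set ρ'' : ℝ := (1 + ρ') / 2 with hρ''def
    have hρ'0 : 0 < ρ' := by rw [hρ'def]; linarith
    have hρρ' : ρ < ρ' := by rw [hρ'def]; linarith
    have hρ'1 : ρ' < 1 := by rw [hρ'def]; linarith
    have hρ''0 : 0 < ρ'' := by rw [hρ''def]; linarith
    have hρ'ρ'' : ρ' < ρ'' := by rw [hρ''def]; linarith
    have hρ''1 : ρ'' < 1 := by rw [hρ''def]; linarith
    set u : (Fin n → ℕ) → ℝ := fun α => ‖mono z α • a α‖ with hudef
    have hu0 : ∀ α, 0 ≤ u α := fun α => norm_nonneg _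
    -- summability at radius ρ''
    have h'' : Summable (fun α => ((ρ'':ℝ):ℂ) ^ (∑ j, α j) • (mono z α • a α)) := by
      have hmem : ((ρ'':ℝ):ℂ) • z ∈ ballq q n := by
        refine smul_mem_ballq hq hz ?_
        rw [Complex.norm_real, Real.norm_eq_abs, abs_of_pos hρ''0]; linarith
      refine (ha.1 _ hmem).congr fun α => ?_
      rw [mono_smul, mul_smul]
    obtain ⟨C, hC0, hC⟩ := bdd_of_summable h''
    have hCu : ∀ α, u α * ρ'' ^ (∑ j, α j) ≤ C := by
      intro α
      have := hC α
      rwa [norm_smul, norm_pow, Complex.norm_real, Real.norm_eq_abs, abs_of_pos hρ''0,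
        mul_comm] at this
    have hsum' : Summable (fun α => u α * ρ' ^ (∑ j, α j)) := by
      refine Summable.of_nonneg_of_le (fun α => by positivity) (fun α => ?_)
        ((summable_pow_deg (by positivity) (by
          rw [div_lt_one hρ''0]; exact hρ'ρ'') : Summable
            (fun α : Fin n → ℕ => (ρ'/ρ'') ^ (∑ j, α j))).mul_left C)
      have hexp : ρ' ^ (∑ j, α j) = ρ'' ^ (∑ j, α j) * (ρ'/ρ'') ^ (∑ j, α j) := by
        rw [← mul_pow]; congr 1; field_simp
      calc u α * ρ' ^ (∑ j, α j)
          = (u α * ρ'' ^ (∑ j, α j)) * (ρ'/ρ'') ^ (∑ j, α j) := by rw [hexp]; ring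
        _ ≤ C * (ρ'/ρ'') ^ (∑ j, α j) :=
            mul_le_mul_of_nonneg_right (hCu α) (by positivity)
    set A : ℝ := ∑' α, u α * ρ' ^ (∑ j, α j) with hAdef
    have hA0 : 0 ≤ A := tsum_nonneg fun α => by positivity
    have hsumρ : Summable (fun α => u α * ρ ^ (∑ j, α j)) := by
      refine Summable.of_nonneg_of_le (fun α => by positivity) (fun α => ?_) hsum'
      exact mul_le_mul_of_nonneg_left
        (pow_le_pow_left₀ (le_of_lt hρ0) (le_of_lt hρρ') _) (hu0 α)
    have ht0 : (0:ℝ) ≤ ρ/ρ' := by positivity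
    have ht1 : ρ/ρ' < 1 := by rw [div_lt_one hρ'0]; exact hρρ'
    -- main bound for each N > m
    have bound : ∀ N : ℕ, m < N → ‖c‖ * ρ ^ m ≤ S + A * (ρ/ρ') ^ N := by
      intro N hmN
      have hN0 : N ≠ 0 := by omega
      have hNC : ((N:ℂ)) ≠ 0 := by exact_mod_cast hN0
      set ω : ℂ := Complex.exp (2 * ↑Real.pi * Complex.I / ↑N) with hωdef
      have prim : IsPrimitiveRoot ω N := Complex.isPrimitiveRoot_exp N hN0
      have hωN : ω ^ N = 1 := prim.pow_eq_one
      have hω0 : ω ≠ 0 := by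
        intro h
        rw [h, zero_pow hN0] at hωN
        exact one_ne_zero hωN.symm
      have hω1 : ‖ω‖ = 1 := by
        have h1 : ‖ω‖ ^ N = 1 := by rw [← norm_pow, hωN, norm_one]
        rcases lt_trichotomy ‖ω‖ 1 with h2 | h2 | h2
        · nlinarith [pow_lt_one₀ (norm_nonneg ω) h2 hN0]
        · exact h2
        · nlinarith [one_lt_pow₀ h2 hN0]
      have hmemj : ∀ j : ℕ, (ω ^ j * (ρ:ℂ)) • z ∈ ballq q n := by
        intro j
        refine smul_mem_ballq hq hz ?_
        rw [norm_mul, norm_pow, hω1, one_pow, one_mul, Complex.norm_real,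
          Real.norm_eq_abs, abs_of_pos hρ0]
        linarith
      set F : ℕ → X := fun j => ∑' α, mono ((ω ^ j * (ρ:ℂ)) • z) α • a α with hFdef
      have hFle : ∀ j, ‖F j‖ ≤ S := fun j => norm_le_supnorm ha (hmemj j)
      have hF : ∀ j : ℕ, HasSum
          (fun α => ((ω ^ j * (ρ:ℂ)) ^ (∑ i, α i)) • (mono z α • a α)) (F j) := by
        intro j
        have heq : (fun α => mono ((ω ^ j * (ρ:ℂ)) • z) α • a α) =
            (fun α => ((ω ^ j * (ρ:ℂ)) ^ (∑ i, α i)) • (mono z α • a α)) :=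
          funext fun α => by rw [mono_smul, mul_smul]
        simp only [hFdef]
        rw [← heq]
        exact (ha.1 _ (hmemj j)).hasSum
      set avg : X := (N:ℂ)⁻¹ • ∑ j ∈ range N, ((ω ^ (m * j))⁻¹) • F j with havgdef
      have havg_le : ‖avg‖ ≤ S := by
        rw [havgdef, norm_smul]
        have h1 : ‖∑ j ∈ range N, ((ω ^ (m * j))⁻¹) • F j‖ ≤ (N:ℝ) * S := by
          refine le_trans (norm_sum_le _ _) ?_
          have h2 : ∀ j ∈ range N, ‖((ω ^ (m * j))⁻¹) • F j‖ ≤ S := by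
            intro j _
            rw [norm_smul, norm_inv, norm_pow, hω1, one_pow, inv_one, one_mul]
            exact hFle j
          calc ∑ j ∈ range N, ‖((ω ^ (m * j))⁻¹) • F j‖ ≤ ∑ _j ∈ range N, S :=
                Finset.sum_le_sum h2
            _ = (N:ℝ) * S := by rw [Finset.sum_const, card_range, nsmul_eq_mul]
        have h2 : ‖((N:ℂ))⁻¹‖ = (N:ℝ)⁻¹ := by rw [norm_inv, Complex.norm_natCast]
        rw [h2]
        have hN0' : (0:ℝ) < (N:ℝ) := by exact_mod_cast Nat.pos_of_ne_zero hN0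
        calc (N:ℝ)⁻¹ * ‖∑ j ∈ range N, ((ω ^ (m * j))⁻¹) • F j‖
            ≤ (N:ℝ)⁻¹ * ((N:ℝ) * S) := mul_le_mul_of_nonneg_left h1 (by positivity)
          _ = S := by rw [← mul_assoc, inv_mul_cancel₀ (ne_of_gt hN0'), one_mul]
      have hAvg : HasSum (fun α => ((N:ℂ)⁻¹ * ∑ j ∈ range N,
          (ω ^ (m * j))⁻¹ * (ω ^ j * (ρ:ℂ)) ^ (∑ i, α i)) • (mono z α • a α)) avg := by
        have h1 : HasSum (fun α => ∑ j ∈ range N,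
            (ω ^ (m * j))⁻¹ • (((ω ^ j * (ρ:ℂ)) ^ (∑ i, α i)) • (mono z α • a α)))
            (∑ j ∈ range N, ((ω ^ (m * j))⁻¹) • F j) :=
          hasSum_sum fun j _ => (hF j).const_smul _
        have h2 := h1.const_smul ((N:ℂ)⁻¹)
        have heq : (fun α => (N:ℂ)⁻¹ • ∑ j ∈ range N,
            (ω ^ (m * j))⁻¹ • (((ω ^ j * (ρ:ℂ)) ^ (∑ i, α i)) • (mono z α • a α)))
            = (fun α => ((N:ℂ)⁻¹ * ∑ j ∈ range N,
              (ω ^ (m * j))⁻¹ * (ω ^ j * (ρ:ℂ)) ^ (∑ i, α i)) • (mono z α • a α)) := by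
          funext α
          simp only [mul_smul, Finset.sum_smul]
        rw [← heq]
        exact h2
      have hscal : ∀ k : ℕ, ((N:ℂ)⁻¹ * ∑ j ∈ range N, (ω ^ (m * j))⁻¹ * (ω ^ j * (ρ:ℂ)) ^ k)
          = if ((N:ℤ) ∣ ((k:ℤ) - (m:ℤ))) then ((ρ:ℂ)) ^ k else 0 := by
        intro k
        have hterm : ∀ j ∈ range N, (ω ^ (m * j))⁻¹ * (ω ^ j * (ρ:ℂ)) ^ k
            = (ω ^ ((k:ℤ) - (m:ℤ))) ^ j * (ρ:ℂ) ^ k := by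
          intro j _
          have hexp : (-((m * j : ℕ) : ℤ) + ((j * k : ℕ) : ℤ)) = ((k:ℤ) - (m:ℤ)) * (j:ℤ) := by
            push_cast; ring
          calc (ω ^ (m * j))⁻¹ * (ω ^ j * (ρ:ℂ)) ^ k
              = ω ^ (-((m * j : ℕ) : ℤ)) * (ω ^ ((j * k : ℕ) : ℤ) * (ρ:ℂ) ^ k) := by
                rw [mul_pow, ← pow_mul, ← zpow_natCast ω (m * j), ← zpow_natCast ω (j * k),
                  zpow_neg]
            _ = ω ^ (((k:ℤ) - (m:ℤ)) * (j:ℤ)) * (ρ:ℂ) ^ k := by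
                rw [← mul_assoc, ← zpow_add₀ hω0, hexp]
            _ = (ω ^ ((k:ℤ) - (m:ℤ))) ^ j * (ρ:ℂ) ^ k := by
                rw [zpow_mul, zpow_natCast]
        rw [Finset.sum_congr rfl hterm, ← Finset.sum_mul]
        by_cases hdvd : ((N:ℤ) ∣ ((k:ℤ) - (m:ℤ)))
        · rw [if_pos hdvd, (prim.zpow_eq_one_iff_dvd _).mpr hdvd]
          simp only [one_pow, Finset.sum_const, card_range, nsmul_eq_mul, mul_one]
          rw [← mul_assoc, inv_mul_cancel₀ hNC, one_mul]
        · rw [if_neg hdvd]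
          have hx1 : ω ^ ((k:ℤ) - (m:ℤ)) ≠ 1 := fun h => hdvd ((prim.zpow_eq_one_iff_dvd _).mp h)
          have hxN : (ω ^ ((k:ℤ) - (m:ℤ))) ^ N = 1 := by
            rw [← zpow_natCast (ω ^ ((k:ℤ) - (m:ℤ))) N, ← zpow_mul, mul_comm, zpow_mul,
              zpow_natCast, hωN, one_zpow]
          rw [geom_sum_eq hx1, hxN]
          simp
      set w : (Fin n → ℕ) → X := fun α =>
        (if ((N:ℤ) ∣ (((∑ i, α i : ℕ):ℤ) - (m:ℤ))) then ((ρ:ℂ)) ^ (∑ i, α i) else 0) •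
          (mono z α • a α) with hwdef
      have hW : HasSum w avg := by
        have heq : (fun α => ((N:ℂ)⁻¹ * ∑ j ∈ range N,
            (ω ^ (m * j))⁻¹ * (ω ^ j * (ρ:ℂ)) ^ (∑ i, α i)) • (mono z α • a α)) = w := by
          funext α
          rw [hwdef, hscal (∑ i, α i)]
        rw [← heq]
        exact hAvg
      set w1 : (Fin n → ℕ) → X := fun α =>
        if (∑ i, α i) = m then ((ρ:ℂ)) ^ m • (mono z α • a α) else 0 with hw1def
      have hW1 : HasSum w1 (((ρ:ℂ)) ^ m • c) := by
        have hsupp : ∀ α ∉ Finset.Nat.antidiagonalTuple n m, w1 α = 0 := by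
          intro α hα
          rw [Finset.Nat.mem_antidiagonalTuple] at hα
          rw [hw1def]
          exact if_neg hα
        have h1 := hasSum_sum_of_ne_finset_zero (L := SummationFilter.unconditional _) hsupp
        have h2 : ∑ α ∈ Finset.Nat.antidiagonalTuple n m, w1 α = ((ρ:ℂ)) ^ m • c := by
          rw [hcdef, Finset.smul_sum]
          refine Finset.sum_congr rfl fun α hα => ?_
          rw [Finset.Nat.mem_antidiagonalTuple] at hα
          rw [hw1def]
          exact if_pos hα
        rwa [h2] at h1
      have hW2 : HasSum (fun α => w α - w1 α) (avg - ((ρ:ℂ)) ^ m • c) := hW.sub hW1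
      have hw2norm : ∀ α, ‖w α - w1 α‖ ≤
          (if N ≤ ∑ i, α i then u α * ρ ^ (∑ i, α i) else 0) := by
        intro α
        simp only [hwdef, hw1def, hudef]
        by_cases h1 : (∑ i, α i) = m
        · have hdvd : (N:ℤ) ∣ (((∑ i, α i : ℕ):ℤ) - (m:ℤ)) := by rw [h1]; simp
          simp only [h1, sub_self, dvd_zero, if_true, norm_zero]
          rw [if_neg (by omega : ¬ N ≤ m)]
        · rw [if_neg h1, sub_zero]
          by_cases h2 : (N:ℤ) ∣ (((∑ i, α i : ℕ):ℤ) - (m:ℤ))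
          · rw [if_pos h2]
            have hNle : N ≤ ∑ i, α i := by
              have h3 : (((∑ i, α i : ℕ):ℤ)) - (m:ℤ) ≠ 0 := by
                intro hh
                apply h1
                have := sub_eq_zero.mp hh
                exact_mod_cast this
              rcases h3.lt_or_gt with h4 | h4
              · have h5 := Int.le_of_dvd (by omega) (dvd_neg.mpr h2)
                omega
              · have h5 := Int.le_of_dvd h4 h2
                omega
            rw [if_pos hNle, norm_smul, norm_pow, Complex.norm_real, Real.norm_eq_abs,
              abs_of_pos hρ0, mul_comm]
          · rw [if_neg h2, zero_smul, norm_zero]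
            split_ifs with h3
            · exact mul_nonneg (norm_nonneg _) (by positivity)
            · exact le_refl 0
      have hsumv : Summable (fun α => if N ≤ ∑ i, α i then u α * ρ ^ (∑ i, α i) else 0) := by
        refine Summable.of_nonneg_of_le (fun α => ?_) (fun α => ?_) hsumρ
        · split_ifs with h
          · exact mul_nonneg (hu0 α) (by positivity)
          · exact le_refl 0
        · split_ifs with h
          · exact le_refl _
          · exact mul_nonneg (hu0 α) (by positivity)
      have hvsum_le : ∑' α, (if N ≤ ∑ i, α i then u α * ρ ^ (∑ i, α i) else 0)
          ≤ A * (ρ/ρ') ^ N := by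
        have hg : Summable (fun α => (ρ/ρ') ^ N * (u α * ρ' ^ (∑ i, α i))) := hsum'.mul_left _
        have hle : ∀ α, (if N ≤ ∑ i, α i then u α * ρ ^ (∑ i, α i) else 0)
            ≤ (ρ/ρ') ^ N * (u α * ρ' ^ (∑ i, α i)) := by
          intro α
          split_ifs with h
          · have hexp : ρ ^ (∑ i, α i) = ρ' ^ (∑ i, α i) * (ρ/ρ') ^ (∑ i, α i) := by
              rw [← mul_pow]; congr 1; field_simp
            have h2 : (ρ/ρ') ^ (∑ i, α i) ≤ (ρ/ρ') ^ N :=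
              pow_le_pow_of_le_one ht0 (le_of_lt ht1) h
            calc u α * ρ ^ (∑ i, α i)
                = (ρ/ρ') ^ (∑ i, α i) * (u α * ρ' ^ (∑ i, α i)) := by rw [hexp]; ring
              _ ≤ (ρ/ρ') ^ N * (u α * ρ' ^ (∑ i, α i)) :=
                  mul_le_mul_of_nonneg_right h2 (mul_nonneg (hu0 α) (by positivity))
          · exact mul_nonneg (by positivity) (mul_nonneg (hu0 α) (by positivity))
        calc ∑' α, (if N ≤ ∑ i, α i then u α * ρ ^ (∑ i, α i) else 0)
            ≤ ∑' α, (ρ/ρ') ^ N * (u α * ρ' ^ (∑ i, α i)) := Summable.tsum_le_tsum hle hsumv hg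
          _ = (ρ/ρ') ^ N * A := by rw [tsum_mul_left, hAdef]
          _ = A * (ρ/ρ') ^ N := mul_comm _ _
      have hsumw2 : Summable (fun α => ‖w α - w1 α‖) :=
        Summable.of_nonneg_of_le (fun α => norm_nonneg _) hw2norm hsumv
      have hnorm2 : ‖avg - ((ρ:ℂ)) ^ m • c‖ ≤ A * (ρ/ρ') ^ N := by
        rw [← hW2.tsum_eq]
        exact le_trans (norm_tsum_le_tsum_norm hsumw2)
          (le_trans (Summable.tsum_le_tsum hw2norm hsumw2 hsumv) hvsum_le)
      have h1 : ‖((ρ:ℂ)) ^ m • c‖ = ρ ^ m * ‖c‖ := by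
        rw [norm_smul, norm_pow, Complex.norm_real, Real.norm_eq_abs, abs_of_pos hρ0]
      have h2 : ‖((ρ:ℂ)) ^ m • c‖ ≤ ‖avg‖ + ‖avg - ((ρ:ℂ)) ^ m • c‖ := by
        calc ‖((ρ:ℂ)) ^ m • c‖ = ‖avg - (avg - ((ρ:ℂ)) ^ m • c)‖ := by rw [sub_sub_cancel]
          _ ≤ ‖avg‖ + ‖avg - ((ρ:ℂ)) ^ m • c‖ := norm_sub_le _ _
      rw [h1] at h2
      have : ρ ^ m * ‖c‖ = ‖c‖ * ρ ^ m := mul_comm _ _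
      linarith
    -- pass to limit in N
    have htt : Tendsto (fun N : ℕ => S + A * (ρ/ρ') ^ N) atTop (𝓝 (S + A * 0)) :=
      tendsto_const_nhds.add ((tendsto_pow_atTop_nhds_zero_of_lt_one ht0 ht1).const_mul A)
    have hev : ∀ᶠ N : ℕ in atTop, ‖c‖ * ρ ^ m ≤ S + A * (ρ/ρ') ^ N := by
      filter_upwards [eventually_gt_atTop m] with N hN using bound N hN
    simpa using ge_of_tendsto htt hev
  have htend : Tendsto (fun ρ : ℝ => ‖c‖ * ρ ^ m) (𝓝[<] (1:ℝ)) (𝓝 (‖c‖ * 1 ^ m)) := by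
    apply Tendsto.mono_left _ nhdsWithin_le_nhds
    exact Continuous.tendsto (by continuity) 1
  have hev : ∀ᶠ ρ in 𝓝[<] (1:ℝ), ‖c‖ * ρ ^ m ≤ S := by
    filter_upwards [Ioo_mem_nhdsLT_of_mem
      (⟨by norm_num, le_refl (1:ℝ)⟩ : (1:ℝ) ∈ Set.Ioc (0:ℝ) 1)] with ρ hρ
    exact key ρ hρ.1 hρ.2
  simpa using le_of_tendsto htend hev


/-- The core estimate in the proof of Proposition 3.1(a): if `r ∈ ℝ_{≥0}^n` satisfies
`∑_{|α|=m} ‖T x_α‖^p r^{pα} ≤ λ sup_{B_{ℓ_q^n}} ‖Q‖^p` for every `m ≥ 1` and every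
`X`-valued `m`-homogeneous polynomial `Q = ∑_{|α|=m} x_α z^α`, then with
`c = ((λ - ‖T‖^p)/(2λ - ‖T‖^p))^{1/p}` one has
`∑_α ‖T x_α‖^p (c r)^{pα} ≤ λ sup_{B_{ℓ_q^n}} ‖f‖^p` for every bounded holomorphic
`f = ∑ x_α z^α : B_{ℓ_q^n} → X`. -/
theorem stmt9 {X Y : Type*} [NormedAddCommGroup X] [NormedSpace ℂ X]
    [NormedAddCommGroup Y] [NormedSpace ℂ Y]
    (p q lam : ℝ) (hp : 1 ≤ p) (hq : 1 ≤ q) (hlam : 1 ≤ lam)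
    (n : ℕ) (T : X →L[ℂ] Y) (hT : ‖T‖ < lam ^ (1 / p))
    (r : Fin n → ℝ) (hr : ∀ i, 0 ≤ r i)
    (hhom : ∀ m : ℕ, 1 ≤ m → ∀ a : (Fin n → ℕ) → X, (∀ α, (∑ j, α j) ≠ m → a α = 0) →
      ∑' α : Fin n → ℕ, ‖T (a α)‖ ^ p * (∏ j, r j ^ α j) ^ p ≤ lam * supnorm q n a ^ p)
    (a : (Fin n → ℕ) → X) (ha : IsHinf q n a) :
    ∑' α : Fin n → ℕ, ‖T (a α)‖ ^ p *
        (∏ j, (((lam - ‖T‖ ^ p) / (2 * lam - ‖T‖ ^ p)) ^ (1 / p) * r j) ^ α j) ^ p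
      ≤ lam * supnorm q n a ^ p := by
  have hp0 : (0:ℝ) < p := by linarith
  have hp0' : p ≠ 0 := ne_of_gt hp0
  have hlam0 : (0:ℝ) < lam := by linarith
  have hT0 : (0:ℝ) ≤ ‖T‖ := norm_nonneg _
  have hTp_lt : ‖T‖ ^ p < lam := by
    have h1 : ‖T‖ ^ p < (lam ^ (1/p)) ^ p := Real.rpow_lt_rpow hT0 hT hp0
    rwa [← Real.rpow_mul (le_of_lt hlam0), one_div_mul_cancel hp0', Real.rpow_one] at h1
  have hTp0 : (0:ℝ) ≤ ‖T‖ ^ p := Real.rpow_nonneg hT0 p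
  have hden : (0:ℝ) < 2 * lam - ‖T‖ ^ p := by linarith
  set E : ℝ := ‖T‖ ^ p with hEdef
  set d : ℝ := (lam - E) / (2 * lam - E) with hddef
  have hd0 : 0 ≤ d := div_nonneg (by linarith) (le_of_lt hden)
  have hd1 : d < 1 := by rw [hddef, div_lt_one hden]; linarith
  set S : ℝ := supnorm q n a with hSdef
  have hS0 : 0 ≤ S := supnorm_nonneg hq ha
  set cc : ℝ := d ^ (1/p) with hccdef
  have hcc0 : 0 ≤ cc := Real.rpow_nonneg hd0 _
  have hcp : ∀ k : ℕ, ((cc ^ k : ℝ)) ^ p = d ^ k := by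
    intro k
    rw [hccdef, ← Real.rpow_natCast (d ^ (1/p)) k, ← Real.rpow_mul hd0,
      ← Real.rpow_mul hd0, ← Real.rpow_natCast d k]
    congr 1
    field_simp
  set t : (Fin n → ℕ) → ℝ := fun α => ‖T (a α)‖ ^ p * (∏ j, r j ^ α j) ^ p with htdef
  have ht0 : ∀ α, 0 ≤ t α :=
    fun α => mul_nonneg (Real.rpow_nonneg (norm_nonneg _) _)
      (Real.rpow_nonneg (Finset.prod_nonneg fun j _ => pow_nonneg (hr j) _) _)
  have hfun : ∀ α : Fin n → ℕ, ‖T (a α)‖ ^ p * (∏ j, (cc * r j) ^ α j) ^ p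
      = d ^ (∑ j, α j) * t α := by
    intro α
    have h1 : (∏ j, (cc * r j) ^ α j) = cc ^ (∑ j, α j) * ∏ j, r j ^ α j := by
      simp only [mul_pow, Finset.prod_mul_distrib, Finset.prod_pow_eq_pow_sum]
    rw [h1, Real.mul_rpow (pow_nonneg hcc0 _)
      (Finset.prod_nonneg fun j _ => pow_nonneg (hr j) _), hcp (∑ j, α j), htdef]
    ring
  have hrw : (∑' α : Fin n → ℕ, ‖T (a α)‖ ^ p * (∏ j, (cc * r j) ^ α j) ^ p)
      = ∑' α : Fin n → ℕ, d ^ (∑ j, α j) * t α := tsum_congr hfun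
  rw [hrw]
  -- bound on each finite partial sum
  have key : ∀ F : Finset (Fin n → ℕ), ∑ α ∈ F, d ^ (∑ j, α j) * t α ≤ lam * S ^ p := by
    intro F
    set M : ℕ := F.sup (fun α => ∑ j, α j) with hMdef
    have hmaps : ∀ α ∈ F, (∑ j, α j) ∈ Finset.range (M + 1) := by
      intro α hα
      rw [Finset.mem_range, Nat.lt_succ_iff]
      exact Finset.le_sup (f := fun α => ∑ j, α j) hα
    rw [← Finset.sum_fiberwise_of_maps_to hmaps (fun α => d ^ (∑ j, α j) * t α)]
    set B : ℕ → ℝ := fun m => if m = 0 then E * S ^ p else lam * S ^ p with hBdef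
    have hB0 : ∀ m, 0 ≤ B m := by
      intro m
      simp only [hBdef]
      split_ifs
      · exact mul_nonneg hTp0 (Real.rpow_nonneg hS0 _)
      · exact mul_nonneg (le_of_lt hlam0) (Real.rpow_nonneg hS0 _)
    -- the key homogeneous bound
    have hinner : ∀ m, ∑ α ∈ F.filter (fun α => (∑ j, α j) = m), t α ≤ B m := by
      intro m
      rcases Nat.eq_zero_or_pos m with hm | hm
      · -- m = 0
        subst hm
        have hsub : F.filter (fun α => (∑ j, α j) = 0) ⊆ {fun _ => 0} := by
          intro α hα
          rw [Finset.mem_filter] at hα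
          rw [Finset.mem_singleton]
          funext j
          exact (Finset.sum_eq_zero_iff.mp hα.2) j (Finset.mem_univ j)
        have h1 : ∑ α ∈ F.filter (fun α => (∑ j, α j) = 0), t α ≤ ∑ α ∈ ({fun _ => 0} :
            Finset (Fin n → ℕ)), t α :=
          Finset.sum_le_sum_of_subset_of_nonneg hsub (fun α _ _ => ht0 α)
        rw [Finset.sum_singleton] at h1
        refine le_trans h1 ?_
        -- t 0 ≤ E * S^p
        have ha0 : ‖a (fun _ => 0)‖ ≤ S := by
          have h2 := coeff_bound hq ha (zero_mem_ballq hq n) 0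
          have h3 : ∑ α ∈ Finset.Nat.antidiagonalTuple n 0, mono (0 : Fin n → ℂ) α • a α
              = a (fun _ => 0) := by
            rw [Finset.Nat.antidiagonalTuple_zero_right, Finset.sum_singleton]
            have : mono (0 : Fin n → ℂ) (0 : Fin n → ℕ) = 1 := by
              simp [mono]
            rw [this, one_smul]
            rfl
          rwa [h3] at h2
        have h4 : ‖T (a (fun _ => 0))‖ ≤ ‖T‖ * S :=
          le_trans (T.le_opNorm _) (mul_le_mul_of_nonneg_left ha0 (norm_nonneg T))
        have h5 : t (fun _ => 0) = ‖T (a (fun _ => 0))‖ ^ p := by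
          rw [htdef]
          simp [Real.one_rpow]
        rw [h5]
        simp only [hBdef, reduceIte]
        rw [hEdef, ← Real.mul_rpow hT0 hS0]
        exact Real.rpow_le_rpow (norm_nonneg _) h4 (le_of_lt hp0)
      · -- m ≥ 1
        set am : (Fin n → ℕ) → X := fun α => if (∑ j, α j) = m then a α else 0 with hamdef
        have hsupp : ∀ α, (∑ j, α j) ≠ m → am α = 0 := fun α h => if_neg h
        have H := hhom m hm am hsupp
        set g : (Fin n → ℕ) → ℝ := fun α => ‖T (am α)‖ ^ p * (∏ j, r j ^ α j) ^ p with hgdef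
        have hg0 : ∀ α, 0 ≤ g α :=
          fun α => mul_nonneg (Real.rpow_nonneg (norm_nonneg _) _)
            (Real.rpow_nonneg (Finset.prod_nonneg fun j _ => pow_nonneg (hr j) _) _)
        have hgsupp : ∀ α ∉ Finset.Nat.antidiagonalTuple n m, g α = 0 := by
          intro α hα
          rw [Finset.Nat.mem_antidiagonalTuple] at hα
          rw [hgdef]
          simp only [hsupp α hα, map_zero, norm_zero, Real.zero_rpow hp0', zero_mul]
        have hgsum : Summable g := summable_of_ne_finset_zero hgsupp
        have h1 : ∑ α ∈ F.filter (fun α => (∑ j, α j) = m), t α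
            = ∑ α ∈ F.filter (fun α => (∑ j, α j) = m), g α := by
          refine Finset.sum_congr rfl fun α hα => ?_
          rw [Finset.mem_filter] at hα
          rw [htdef, hgdef]
          simp only [hamdef, if_pos hα.2]
        have h2 : ∑ α ∈ F.filter (fun α => (∑ j, α j) = m), g α ≤ ∑' α, g α :=
          Summable.sum_le_tsum _ (fun α _ => hg0 α) hgsum
        -- supnorm am ≤ S
        have hub : ∀ y ∈ {y | ∃ z ∈ ballq q n, y = ‖∑' α, mono z α • am α‖}, y ≤ S := by
          rintro y ⟨z, hz, rfl⟩
          have h3 : (∑' α, mono z α • am α)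
              = ∑ α ∈ Finset.Nat.antidiagonalTuple n m, mono z α • am α := by
            refine tsum_eq_sum fun α hα => ?_
            rw [Finset.Nat.mem_antidiagonalTuple] at hα
            rw [hsupp α hα, smul_zero]
          have h4 : ∑ α ∈ Finset.Nat.antidiagonalTuple n m, mono z α • am α
              = ∑ α ∈ Finset.Nat.antidiagonalTuple n m, mono z α • a α := by
            refine Finset.sum_congr rfl fun α hα => ?_
            rw [Finset.Nat.mem_antidiagonalTuple] at hα
            simp only [hamdef, if_pos hα]
          rw [h3, h4]
          exact coeff_bound hq ha hz m
        have hsn : supnorm q n am ≤ S := Real.sSup_le hub hS0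
        have hsn0 : 0 ≤ supnorm q n am := by
          refine le_trans (norm_nonneg (∑' α, mono (0 : Fin n → ℂ) α • am α)) ?_
          exact le_csSup ⟨S, hub⟩ ⟨0, zero_mem_ballq hq n, rfl⟩
        have h5 : lam * supnorm q n am ^ p ≤ lam * S ^ p :=
          mul_le_mul_of_nonneg_left (Real.rpow_le_rpow hsn0 hsn (le_of_lt hp0))
            (le_of_lt hlam0)
        simp only [hBdef]
        rw [if_neg (Nat.pos_iff_ne_zero.mp hm)]
        exact le_trans (le_of_eq h1) (le_trans h2 (le_trans H h5))
    have houter : ∀ m ∈ Finset.range (M + 1),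
        ∑ α ∈ F.filter (fun α => (∑ j, α j) = m), d ^ (∑ j, α j) * t α ≤ d ^ m * B m := by
      intro m _
      have h1 : ∑ α ∈ F.filter (fun α => (∑ j, α j) = m), d ^ (∑ j, α j) * t α
          = d ^ m * ∑ α ∈ F.filter (fun α => (∑ j, α j) = m), t α := by
        rw [Finset.mul_sum]
        refine Finset.sum_congr rfl fun α hα => ?_
        rw [Finset.mem_filter] at hα
        rw [hα.2]
      rw [h1]
      exact mul_le_mul_of_nonneg_left (hinner m) (pow_nonneg hd0 m)
    refine le_trans (Finset.sum_le_sum houter) ?_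
    -- geometric series computation
    have hgeom : ∑ m ∈ Finset.range (M + 1), d ^ m * B m
        ≤ E * S ^ p + lam * S ^ p * (d * (1 - d)⁻¹) := by
      rw [Finset.sum_range_succ']
      have h1 : d ^ 0 * B 0 = E * S ^ p := by
        simp [hBdef]
      have h2 : ∀ i, d ^ (i + 1) * B (i + 1) = lam * S ^ p * d * d ^ i := by
        intro i
        simp only [hBdef, Nat.succ_ne_zero, if_false]
        rw [pow_succ]
        ring
      rw [h1]
      have h3 : ∑ i ∈ Finset.range M, d ^ (i + 1) * B (i + 1)
          = lam * S ^ p * d * ∑ i ∈ Finset.range M, d ^ i := by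
        rw [Finset.mul_sum]
        exact Finset.sum_congr rfl fun i _ => h2 i
      rw [h3]
      have h4 : ∑ i ∈ Finset.range M, d ^ i ≤ (1 - d)⁻¹ := by
        rw [← tsum_geometric_of_lt_one hd0 hd1]
        exact Summable.sum_le_tsum _ (fun i _ => pow_nonneg hd0 i)
          (summable_geometric_of_lt_one hd0 hd1)
      have h5 : lam * S ^ p * d * ∑ i ∈ Finset.range M, d ^ i
          ≤ lam * S ^ p * d * (1 - d)⁻¹ := by
        refine mul_le_mul_of_nonneg_left h4 ?_
        exact mul_nonneg (mul_nonneg (le_of_lt hlam0) (Real.rpow_nonneg hS0 _)) hd0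
      have h6 : lam * S ^ p * d * (1 - d)⁻¹ = lam * S ^ p * (d * (1 - d)⁻¹) := by ring
      linarith
    have hfrac : d * (1 - d)⁻¹ = (lam - E) / lam := by
      rw [hddef]
      have h1 : 1 - (lam - E) / (2 * lam - E) = lam / (2 * lam - E) := by
        rw [eq_div_iff hden.ne', sub_mul, div_mul_cancel₀ _ hden.ne']; ring
      rw [h1, inv_div]
      have hne : 2 * lam - E ≠ 0 := ne_of_gt hden
      have hlne : lam ≠ 0 := ne_of_gt hlam0
      field_simp
      exact mul_div_cancel_right₀ _ (by rw [mul_comm]; exact hne)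
    have hfinal : E * S ^ p + lam * S ^ p * (d * (1 - d)⁻¹) = lam * S ^ p := by
      rw [hfrac]
      field_simp
      ring
    linarith
  refine Summable.tsum_le_of_sum_le (summable_of_sum_le ?_ key) key
  intro α
  exact mul_nonneg (pow_nonneg hd0 _) (ht0 α)


end
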